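/- Let p ≥ 2 be an integer, r a real number with 0 < r < 1, and s ∈ ℝ^p with sᵢ > 0 for all i; let s_min = minᵢ sᵢ. For every vector w ∈ ℝ^p with Σᵢ |wᵢ| = 1, one has Q_S(w,r) ≤ (1+(p−2)r)/(D(p,r) · s_min²), and equality holds for w = e_{j₀}, a standard basis vector at any index j₀ with s_{j₀} = s_min; that is, among all normalized group effects of the general uniform model, the hardest to estimate is the individual effect of the variable with the smallest variability, with estimator variance (1+(p−2)r)/(D(p,r)·s_min²). -/

import Mathlib

open Matrix

/-- The `p × p` Gram/correlation matrix of a uniform model at multicollinearity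
level `r`: diagonal entries `1`, off-diagonal entries `r`. -/
noncomputable def unifMat (p : ℕ) (r : ℝ) : Matrix (Fin p) (Fin p) ℝ :=
  fun i j => if i = j then 1 else r

lemma unifMat_inv (p : ℕ) (hp : 2 ≤ p) (r : ℝ) (hr0 : 0 < r) (hr1 : r < 1) :
    (unifMat p r)⁻¹ = fun i j => if i = j then
      (1+((p:ℝ)-2)*r)/((1-r)*(1+((p:ℝ)-1)*r)) else
      -r/((1-r)*(1+((p:ℝ)-1)*r)) := by
  have hp2 : (2:ℝ) ≤ (p:ℝ) := by exact_mod_cast hp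
  have h1 : 0 < 1 - r := by linarith
  have h2 : 0 < 1 + ((p:ℝ)-1)*r := by nlinarith
  have hD : (1-r)*(1+((p:ℝ)-1)*r) ≠ 0 := by positivity
  apply Matrix.inv_eq_right_inv
  ext i j
  erw [Matrix.mul_apply]
  simp only [Matrix.mul_apply, unifMat, Matrix.one_apply]
  rcases eq_or_ne i j with h | h
  · subst h
    have : ∀ k : Fin p, (if i = k then (1:ℝ) else r) *
        (if k = i then (1+((p:ℝ)-2)*r)/((1-r)*(1+((p:ℝ)-1)*r)) else -r/((1-r)*(1+((p:ℝ)-1)*r)))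
        = r * (-r/((1-r)*(1+((p:ℝ)-1)*r))) +
          (if k = i then (1+((p:ℝ)-2)*r)/((1-r)*(1+((p:ℝ)-1)*r)) - r * (-r/((1-r)*(1+((p:ℝ)-1)*r))) else 0) := by
      intro k
      rcases eq_or_ne k i with hk | hk
      · subst hk; simp
      · simp [hk, Ne.symm hk]
    rw [Finset.sum_congr rfl (fun k _ => this k)]
    rw [Finset.sum_add_distrib, Finset.sum_const, Finset.sum_ite_eq']
    simp only [Finset.mem_univ, if_true, Finset.card_univ, Fintype.card_fin, nsmul_eq_mul]
    rw [show (p:ℝ) * (r * (-r / ((1 - r) * (1 + ((p:ℝ) - 1) * r)))) +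
        ((1 + ((p:ℝ) - 2) * r) / ((1 - r) * (1 + ((p:ℝ) - 1) * r)) - r * (-r / ((1 - r) * (1 + ((p:ℝ) - 1) * r))))
        = ((p:ℝ) * (r * -r) + ((1 + ((p:ℝ) - 2) * r) - r * -r)) / ((1 - r) * (1 + ((p:ℝ) - 1) * r)) by ring,
      div_eq_one_iff_eq hD]
    ring
  · have : ∀ k : Fin p, (if i = k then (1:ℝ) else r) *
        (if k = j then (1+((p:ℝ)-2)*r)/((1-r)*(1+((p:ℝ)-1)*r)) else -r/((1-r)*(1+((p:ℝ)-1)*r)))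
        = r * (-r/((1-r)*(1+((p:ℝ)-1)*r))) +
          ((if k = i then (-r/((1-r)*(1+((p:ℝ)-1)*r))) - r * (-r/((1-r)*(1+((p:ℝ)-1)*r))) else 0) +
           (if k = j then r * ((1+((p:ℝ)-2)*r)/((1-r)*(1+((p:ℝ)-1)*r))) - r * (-r/((1-r)*(1+((p:ℝ)-1)*r))) else 0)) := by
      intro k
      rcases eq_or_ne k i with hk | hk
      · subst hk
        have hkj : k ≠ j := h
        simp [hkj]
      · rcases eq_or_ne k j with hk2 | hk2
        · subst hk2
          simp [hk, Ne.symm hk]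
        · simp [hk, hk2, Ne.symm hk]
    rw [Finset.sum_congr rfl (fun k _ => this k)]
    rw [Finset.sum_add_distrib, Finset.sum_add_distrib, Finset.sum_const,
      Finset.sum_ite_eq', Finset.sum_ite_eq']
    simp only [Finset.mem_univ, if_true, Finset.card_univ, Fintype.card_fin, nsmul_eq_mul, h, if_false]
    field_simp
    ring

/-- `Q_S(w,r) = wᵀ S⁻¹ A(p,r)⁻¹ S⁻¹ w` with `S = diag s`. -/
noncomputable def QSform (p : ℕ) (r : ℝ) (s w : Fin p → ℝ) : ℝ :=
  (fun i => w i / s i) ⬝ᵥ (unifMat p r)⁻¹.mulVec (fun i => w i / s i)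

/-- let `j₀` be any index attaining the minimal variability
`s_min = s j₀ = minᵢ sᵢ`. Over all normalized group effects (`Σᵢ |wᵢ| = 1`),
the variance `Q_S(w,r)` is at most `(1+(p−2)r)/(D(p,r)·s_min²)`, with equality
at the standard basis vector `e_{j₀}`: the individual effect of the variable
with the smallest variability is the hardest to estimate. -/
theorem QS_hardest_is_min_variability (p : ℕ) (hp : 2 ≤ p) (r : ℝ)
    (hr0 : 0 < r) (hr1 : r < 1) (s : Fin p → ℝ) (hs : ∀ i, 0 < s i)
    (j₀ : Fin p) (hj₀ : ∀ i, s j₀ ≤ s i) :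
    (∀ w : Fin p → ℝ, (∑ i, |w i|) = 1 →
      QSform p r s w ≤
        (1 + ((p : ℝ) - 2) * r) /
          ((1 + ((p : ℝ) - 2) * r - ((p : ℝ) - 1) * r ^ 2) * (s j₀) ^ 2)) ∧
    QSform p r s (fun i => if i = j₀ then 1 else 0) =
      (1 + ((p : ℝ) - 2) * r) /
        ((1 + ((p : ℝ) - 2) * r - ((p : ℝ) - 1) * r ^ 2) * (s j₀) ^ 2) := by
  have hp2 : (2:ℝ) ≤ (p:ℝ) := by exact_mod_cast hp
  have h1 : 0 < 1 - r := by linarith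
  have h2 : 0 < 1 + ((p:ℝ)-1)*r := by nlinarith
  have hDpos : 0 < (1-r)*(1+((p:ℝ)-1)*r) := by positivity
  set D : ℝ := (1-r)*(1+((p:ℝ)-1)*r) with hDdef
  have hD : D ≠ 0 := ne_of_gt hDpos
  have hDeq : 1 + ((p:ℝ)-2)*r - ((p:ℝ)-1)*r^2 = D := by rw [hDdef]; ring
  set a : ℝ := (1+((p:ℝ)-2)*r)/D with hadef
  set c : ℝ := r/D with hcdef
  have hinv := unifMat_inv p hp r hr0 hr1
  have hs0 : s j₀ ≠ 0 := ne_of_gt (hs j₀)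
  have ha : 0 ≤ a := by
    apply div_nonneg _ (le_of_lt hDpos); nlinarith
  have hc : 0 ≤ c := div_nonneg (le_of_lt hr0) (le_of_lt hDpos)
  have hac : c ≤ a := by
    rw [hadef, hcdef, div_le_div_iff₀ hDpos hDpos]
    nlinarith [mul_nonneg (sub_nonneg.mpr hp2) hr0.le, hDpos]
  constructor
  · intro w hw
    set v : Fin p → ℝ := fun i => w i / s i with hvdef
    set U : ℝ := ∑ i, |v i| with hUdef
    have hU0 : 0 ≤ U := Finset.sum_nonneg (fun i _ => abs_nonneg _)
    have hQ : QSform p r s w = ∑ i, ∑ j, v i * ((if i = j then a else -c) * v j) := by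
      simp only [QSform, hinv, dotProduct, mulVec]
      refine Finset.sum_congr rfl (fun i _ => ?_)
      rw [Finset.mul_sum]
      refine Finset.sum_congr rfl (fun j _ => ?_)
      rcases eq_or_ne i j with h | h
      · simp [h, hadef, hDdef, hvdef]
      · simp [h, hcdef, hDdef, hvdef]
        ring
    -- pointwise bound
    have hpt : ∀ i j : Fin p, v i * ((if i = j then a else -c) * v j)
        ≤ |v i| * ((if i = j then a else c) * |v j|) := by
      intro i j
      rcases eq_or_ne i j with h | h
      · subst h
        simp only [eq_self_iff_true, if_true]
        rw [show v i * (a * v i) = a * (v i * v i) by ring,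
          show |v i| * (a * |v i|) = a * (|v i| * |v i|) by ring, abs_mul_abs_self]
      · simp only [h, if_neg h]
        calc v i * (-c * v j) ≤ |v i * (-c * v j)| := le_abs_self _
          _ = |v i| * (c * |v j|) := by
              rw [abs_mul, abs_mul, abs_neg, abs_of_nonneg hc]
    have hsum1 : QSform p r s w ≤ ∑ i, ∑ j, |v i| * ((if i = j then a else c) * |v j|) := by
      rw [hQ]
      exact Finset.sum_le_sum (fun i _ => Finset.sum_le_sum (fun j _ => hpt i j))
    -- closed form of the majorant
    have hinner : ∀ i : Fin p, ∑ j, |v i| * ((if i = j then a else c) * |v j|)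
        = c * |v i| * U + (a - c) * |v i|^2 := by
      intro i
      have : ∀ j : Fin p, |v i| * ((if i = j then a else c) * |v j|)
          = c * |v i| * |v j| + (if i = j then (a - c) * |v i| * |v j| else 0) := by
        intro j
        rcases eq_or_ne i j with h | h
        · simp [h]; ring
        · simp [h]; ring
      rw [Finset.sum_congr rfl (fun j _ => this j), Finset.sum_add_distrib,
        Finset.sum_ite_eq, if_pos (Finset.mem_univ i), ← Finset.mul_sum, ← hUdef]
      ring
    have hsum2 : ∑ i, ∑ j, |v i| * ((if i = j then a else c) * |v j|)
        = c * U^2 + (a - c) * ∑ i, |v i|^2 := by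
      rw [Finset.sum_congr rfl (fun i _ => hinner i), Finset.sum_add_distrib,
        ← Finset.mul_sum]
      rw [← Finset.sum_mul, ← Finset.mul_sum, ← hUdef]
      ring
    -- Σ |v i|² ≤ U²
    have hsq : ∑ i, |v i|^2 ≤ U^2 := by
      have : ∀ i : Fin p, |v i|^2 ≤ |v i| * U := by
        intro i
        rw [sq]
        exact mul_le_mul_of_nonneg_left
          (Finset.single_le_sum (fun j _ => abs_nonneg (v j)) (Finset.mem_univ i))
          (abs_nonneg _)
      calc ∑ i, |v i|^2 ≤ ∑ i, |v i| * U := Finset.sum_le_sum (fun i _ => this i)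
        _ = U^2 := by rw [← Finset.sum_mul, ← hUdef, sq]
    -- U ≤ 1 / s j₀
    have hUle : U ≤ 1 / s j₀ := by
      have : ∀ i : Fin p, |v i| ≤ |w i| * (s j₀)⁻¹ := by
        intro i
        rw [hvdef]
        simp only [abs_div, abs_of_pos (hs i)]
        rw [div_eq_mul_inv]
        exact mul_le_mul_of_nonneg_left
          (inv_anti₀ (hs j₀) (hj₀ i)) (abs_nonneg _)
      calc U ≤ ∑ i, |w i| * (s j₀)⁻¹ := Finset.sum_le_sum (fun i _ => this i)
        _ = 1 / s j₀ := by rw [← Finset.sum_mul, hw, one_mul, one_div]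
    have hfinal : QSform p r s w ≤ a * (1 / s j₀)^2 := by
      calc QSform p r s w ≤ c * U^2 + (a - c) * ∑ i, |v i|^2 := by
            rw [← hsum2]; exact hsum1
        _ ≤ c * U^2 + (a - c) * U^2 :=
            add_le_add_right (mul_le_mul_of_nonneg_left hsq (by linarith)) _
        _ = a * U^2 := by ring
        _ ≤ a * (1 / s j₀)^2 := by
            apply mul_le_mul_of_nonneg_left _ ha
            exact pow_le_pow_left₀ hU0 hUle 2
    rw [hDeq]
    calc QSform p r s w ≤ a * (1 / s j₀)^2 := hfinal
      _ = (1 + ((p : ℝ) - 2) * r) / (D * (s j₀)^2) := by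
          rw [hadef, hDdef]; field_simp
  · rw [hDeq]
    simp only [QSform, hinv, dotProduct, mulVec]
    have hv : ∀ i : Fin p, (if i = j₀ then (1:ℝ) else 0) / s i
        = if i = j₀ then 1 / s j₀ else 0 := by
      intro i
      rcases eq_or_ne i j₀ with h | h
      · simp [h]
      · simp [h]
    simp only [hv]
    rw [Finset.sum_eq_single j₀]
    · rw [if_pos rfl, Finset.sum_eq_single j₀]
      · rw [if_pos rfl, if_pos rfl]
        rw [hDdef]
        field_simp
      · intro j _ hj; simp [hj]
      · intro h; exact absurd (Finset.mem_univ j₀) h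
    · intro i _ hi; simp [hi]
    · intro h; exact absurd (Finset.mem_univ j₀) h
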